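/- For all x, y in the unit disk B² ⊂ ℂ, (1/2)·b_{B²,2}(x,y) ≤ j*_{B²}(x,y) ≤ b_{B²,2}(x,y). -/

import Mathlib

/-- The j*-metric of the unit disk. -/
noncomputable def jB (x y : ℂ) : ℝ :=
  ‖x - y‖ /
    (‖x - y‖ + 2 * min (1 - ‖x‖) (1 - ‖y‖))

/-- Barrlund metric with parameter 2 of the unit disk (closed form). -/
noncomputable def bB2 (x y : ℂ) : ℝ :=
  ‖x - y‖ /
    Real.sqrt (2 + ‖x‖ ^ 2 + ‖y‖ ^ 2 - 2 * ‖x + y‖)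

/-- For any boundary point `z`, `2+|x|²+|y|²-2|x+y| ≤ |x-z|²+|y-z|²`. -/
lemma bd_pt (x y z : ℂ) (hz : ‖z‖ = 1) :
    2 + ‖x‖ ^ 2 + ‖y‖ ^ 2 - 2 * ‖x + y‖ ≤
      ‖x - z‖ ^ 2 + ‖y - z‖ ^ 2 := by
  have h1 : ((x + y) * (starRingEnd ℂ) z).re ≤ ‖x + y‖ := by
    calc ((x + y) * (starRingEnd ℂ) z).re ≤ ‖(x + y) * (starRingEnd ℂ) z‖ :=
          Complex.re_le_norm _
      _ = ‖x + y‖ := by rw [norm_mul, Complex.norm_conj, hz, mul_one]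
  have e1 : ‖x - z‖ ^ 2 = Complex.normSq (x - z) := Complex.sq_norm _
  have e2 : ‖y - z‖ ^ 2 = Complex.normSq (y - z) := Complex.sq_norm _
  have e3 : Complex.normSq (x - z) = Complex.normSq x + Complex.normSq z
      - 2 * (x * (starRingEnd ℂ) z).re := Complex.normSq_sub x z
  have e4 : Complex.normSq (y - z) = Complex.normSq y + Complex.normSq z
      - 2 * (y * (starRingEnd ℂ) z).re := Complex.normSq_sub y z
  have e5 : Complex.normSq x = ‖x‖ ^ 2 := (Complex.sq_norm x).symm
  have e6 : Complex.normSq y = ‖y‖ ^ 2 := (Complex.sq_norm y).symm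
  have e7 : Complex.normSq z = 1 := by rw [← Complex.sq_norm, hz]; norm_num
  have e8 : ((x + y) * (starRingEnd ℂ) z).re
      = (x * (starRingEnd ℂ) z).re + (y * (starRingEnd ℂ) z).re := by
    rw [add_mul, Complex.add_re]
  rw [e1, e2, e3, e4, e5, e6, e7]
  linarith [h1, e8.symm.le, e8.le]

/-- The upper bound in the case `|y| ≤ |x|`. -/
lemma aux_ub (x y : ℂ) (hx : ‖x‖ < 1) (hy : ‖y‖ < 1)
    (hba : ‖y‖ ≤ ‖x‖) :
    2 + ‖x‖ ^ 2 + ‖y‖ ^ 2 - 2 * ‖x + y‖ ≤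
      (‖x - y‖ + 2 * (1 - ‖x‖)) ^ 2 := by
  have ha0 : 0 ≤ ‖x‖ := norm_nonneg x
  have hd0 : 0 ≤ ‖x - y‖ := norm_nonneg _
  by_cases hx0 : x = 0
  · have hy0 : y = 0 := by
      have : ‖y‖ = 0 := le_antisymm (by simpa [hx0] using hba) (norm_nonneg y)
      exact norm_eq_zero.mp this
    simp [hx0, hy0]
    norm_num
  · set z : ℂ := ((‖x‖ : ℂ))⁻¹ * x with hzdef
    have haz : ‖x‖ ≠ 0 := fun h => hx0 (norm_eq_zero.mp h)
    have hapos : 0 < ‖x‖ := lt_of_le_of_ne ha0 (Ne.symm haz)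
    have hz1 : ‖z‖ = 1 := by
      rw [hzdef, norm_mul, norm_inv, Complex.norm_real, Real.norm_eq_abs, abs_of_pos hapos,
        inv_mul_cancel₀ haz]
    have hxz : ‖x - z‖ = 1 - ‖x‖ := by
      have : x - z = ((1 : ℂ) - ((‖x‖ : ℂ))⁻¹) * x := by rw [hzdef]; ring
      rw [this, norm_mul]
      have : (1 : ℂ) - ((‖x‖ : ℂ))⁻¹ = (((1 : ℝ) - (‖x‖)⁻¹ : ℝ) : ℂ) := by
        push_cast; ring
      rw [this, Complex.norm_real, Real.norm_eq_abs, abs_of_nonpos (by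
        have h1 : 0 < (‖x‖)⁻¹ := inv_pos.2 hapos
        have h2 : ‖x‖ * (‖x‖)⁻¹ = 1 := mul_inv_cancel₀ haz
        nlinarith)]
      field_simp
      ring
    have hyz : ‖y - z‖ ≤ ‖x - y‖ + (1 - ‖x‖) := by
      have hsplit : y - z = (y - x) + (x - z) := by ring
      have hyx : ‖y - x‖ = ‖x - y‖ := by
        rw [← neg_sub x y, norm_neg]
      calc ‖y - z‖ = ‖(y - x) + (x - z)‖ := by rw [hsplit]
        _ ≤ ‖y - x‖ + ‖x - z‖ := norm_add_le _ _
        _ = ‖x - y‖ + (1 - ‖x‖) := by rw [hxz, hyx]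
    have key := bd_pt x y z hz1
    nlinarith [norm_nonneg (y - z), sq_nonneg (‖x - y‖)]

set_option maxHeartbeats 1000000 in
theorem stmt_4 (x y : ℂ) (hx : ‖x‖ < 1) (hy : ‖y‖ < 1) :
    (1 / 2) * bB2 x y ≤ jB x y ∧ jB x y ≤ bB2 x y := by
  unfold jB bB2
  set a := ‖x‖ with hadef
  set b := ‖y‖ with hbdef
  set d := ‖x - y‖ with hddef
  set s := ‖x + y‖ with hsdef
  set m := min (1 - a) (1 - b) with hmdef
  set E := 2 + a ^ 2 + b ^ 2 - 2 * s with hEdef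
  have ha0 : 0 ≤ a := norm_nonneg x
  have hb0 : 0 ≤ b := norm_nonneg y
  have hd0 : 0 ≤ d := norm_nonneg _
  have hs0 : 0 ≤ s := norm_nonneg _
  have hm0 : 0 < m := lt_min (by linarith) (by linarith)
  have hma : m ≤ 1 - a := min_le_left _ _
  have hmb : m ≤ 1 - b := min_le_right _ _
  have hsub : s ≤ a + b := norm_add_le x y
  have hpar : s ^ 2 + d ^ 2 = 2 * (a ^ 2 + b ^ 2) := by
    have := parallelogram_law_with_norm ℝ x y
    rw [hsdef, hddef, hadef, hbdef]
    ring_nf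
    nlinarith [this]
  have hub : E ≤ (d + 2 * m) ^ 2 := by
    rcases le_total b a with hba | hab
    · have hm' : m = 1 - a := min_eq_left (by linarith)
      rw [hm']
      exact aux_ub x y hx hy hba
    · have hm' : m = 1 - b := min_eq_right (by linarith)
      have h := aux_ub y x hy hx hab
      have h1 : ‖y - x‖ = d := by
        rw [hddef, ← neg_sub x y, norm_neg]
      have h2 : ‖y + x‖ = s := by rw [hsdef, add_comm]
      rw [h1, h2] at h
      rw [hm', hEdef]
      linarith [h]
  have hlb : (d + 2 * m) ^ 2 ≤ 4 * E := by
    have h2s : 2 * m ≤ 2 - s := by linarith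
    nlinarith [sq_nonneg (d - (2 - s)), hd0, hm0.le, h2s, hpar]
  have hE0 : 0 < E := by nlinarith [hlb, hm0, hd0]
  have hdm0 : 0 < d + 2 * m := by linarith
  have hsE0 : 0 < Real.sqrt E := Real.sqrt_pos.2 hE0
  have hsq_le : Real.sqrt E ≤ d + 2 * m := by
    calc Real.sqrt E ≤ Real.sqrt ((d + 2 * m) ^ 2) := Real.sqrt_le_sqrt hub
      _ = d + 2 * m := Real.sqrt_sq hdm0.le
  have hle2 : d + 2 * m ≤ 2 * Real.sqrt E := by
    calc d + 2 * m = Real.sqrt ((d + 2 * m) ^ 2) := (Real.sqrt_sq hdm0.le).symm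
      _ ≤ Real.sqrt (4 * E) := Real.sqrt_le_sqrt hlb
      _ = 2 * Real.sqrt E := by
          rw [show (4 : ℝ) * E = (2 : ℝ) ^ 2 * E by ring, Real.sqrt_mul (by positivity),
            Real.sqrt_sq (by norm_num)]
  constructor
  · have heq : (1 / 2 : ℝ) * (d / Real.sqrt E) = d / (2 * Real.sqrt E) := by
      field_simp
    rw [heq]
    exact div_le_div_of_nonneg_left hd0 hdm0 hle2
  · exact div_le_div_of_nonneg_left hd0 hsE0 hsq_le
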